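/- Let A be an n×n real matrix with nonnegative entries. Then A is normal if and only if A is asymptotic (i.e., Aᵖ → 0 as p → ∞). -/

import Mathlib

open Filter Topology Matrix

lemma pow_entry_nonneg {n : ℕ} (A : Matrix (Fin n) (Fin n) ℝ)
    (hA : ∀ i j, 0 ≤ A i j) : ∀ p i j, 0 ≤ (A ^ p) i j := by
  intro p
  induction p with
  | zero =>
    intro i j
    simp only [pow_zero, Matrix.one_apply]
    split <;> norm_num
  | succ p ih =>
    intro i j
    rw [pow_succ, Matrix.mul_apply]
    exact Finset.sum_nonneg fun k _ => mul_nonneg (ih i k) (hA k j)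

/-- A nonnegative matrix is normal iff it is asymptotic (`A^p → 0`). -/
theorem stmt7 {n : ℕ} (A : Matrix (Fin n) (Fin n) ℝ)
    (hA : ∀ i j, 0 ≤ A i j) :
    (∃ z : Fin n → ℝ, (∀ i, 0 < z i) ∧ ∀ i, A.mulVec z i < z i) ↔
      Tendsto (fun p : ℕ => A ^ p) atTop (𝓝 0) := by
  have hpow := pow_entry_nonneg A hA
  constructor
  · rintro ⟨z, hz, hAz⟩
    refine tendsto_pi_nhds.mpr ?_
    intro i
    rw [tendsto_pi_nhds]
    intro j
    simp only [Matrix.zero_apply]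
    haveI : Nonempty (Fin n) := ⟨i⟩
    set c : ℝ := Finset.univ.sup' Finset.univ_nonempty (fun k => A.mulVec z k / z k) with hc
    have hc1 : c < 1 := by
      rw [Finset.sup'_lt_iff]
      intro k _
      exact (div_lt_one (hz k)).mpr (hAz k)
    have hmv : ∀ k, 0 ≤ A.mulVec z k := by
      intro k
      simp only [Matrix.mulVec, dotProduct]
      exact Finset.sum_nonneg fun l _ => mul_nonneg (hA k l) (hz l).le
    have hc0 : 0 ≤ c := by
      refine le_trans (div_nonneg (hmv i) (hz i).le) ?_
      exact Finset.le_sup' (f := fun k => A.mulVec z k / z k) (Finset.mem_univ i)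
    have hcz : ∀ k, A.mulVec z k ≤ c * z k := by
      intro k
      have := Finset.le_sup' (fun k => A.mulVec z k / z k) (Finset.mem_univ k)
      calc A.mulVec z k = (A.mulVec z k / z k) * z k :=
            (div_mul_cancel₀ _ (hz k).ne').symm
        _ ≤ c * z k := mul_le_mul_of_nonneg_right this (hz k).le
    have key : ∀ p k, ((A ^ p).mulVec z) k ≤ c ^ p * z k := by
      intro p
      induction p with
      | zero => intro k; simp [Matrix.one_mulVec]
      | succ p ih =>
        intro k
        have hstep : (A ^ (p + 1)).mulVec z = A.mulVec ((A ^ p).mulVec z) := by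
          rw [pow_succ', Matrix.mulVec_mulVec]
        rw [hstep]
        calc A.mulVec ((A ^ p).mulVec z) k
            = ∑ l, A k l * ((A ^ p).mulVec z) l := rfl
          _ ≤ ∑ l, A k l * (c ^ p * z l) := by
              refine Finset.sum_le_sum fun l _ => ?_
              exact mul_le_mul_of_nonneg_left (ih l) (hA k l)
          _ = c ^ p * A.mulVec z k := by
              simp only [Matrix.mulVec, dotProduct, Finset.mul_sum]
              exact Finset.sum_congr rfl fun l _ => by ring
          _ ≤ c ^ p * (c * z k) := by
              exact mul_le_mul_of_nonneg_left (hcz k) (pow_nonneg hc0 p)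
          _ = c ^ (p + 1) * z k := by ring
    have hub : ∀ p, (A ^ p) i j ≤ c ^ p * (z i / z j) := by
      intro p
      have h1 : (A ^ p) i j * z j ≤ ((A ^ p).mulVec z) i := by
        refine Finset.single_le_sum (f := fun l => (A ^ p) i l * z l) ?_ (Finset.mem_univ j)
        exact fun l _ => mul_nonneg (hpow p i l) (hz l).le
      have h2 := le_trans h1 (key p i)
      rw [div_eq_mul_inv, ← mul_assoc]
      calc (A ^ p) i j = (A ^ p) i j * z j * (z j)⁻¹ := by
            rw [mul_assoc, mul_inv_cancel₀ (hz j).ne', mul_one]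
        _ ≤ c ^ p * z i * (z j)⁻¹ :=
            mul_le_mul_of_nonneg_right h2 (inv_nonneg.mpr (hz j).le)
    have hgeo : Tendsto (fun p : ℕ => c ^ p * (z i / z j)) atTop (𝓝 0) := by
      have := (tendsto_pow_atTop_nhds_zero_of_lt_one hc0 hc1).mul_const (z i / z j)
      simpa using this
    exact squeeze_zero (fun p => hpow p i j) hub hgeo
  · intro h
    set r : ℕ → Fin n → ℝ := fun k i => ∑ j, (A ^ k) i j with hr
    have hent : ∀ i j, Tendsto (fun p : ℕ => (A ^ p) i j) atTop (𝓝 0) := by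
      intro i j
      have h1 := (tendsto_pi_nhds.mp h) i
      have h2 := (tendsto_pi_nhds.mp h1) j
      simpa using h2
    have hrow : ∀ i, Tendsto (fun p : ℕ => r p i) atTop (𝓝 0) := by
      intro i
      have := tendsto_finset_sum (Finset.univ : Finset (Fin n))
        (fun j _ => hent i j)
      simpa [hr] using this
    have hev : ∀ᶠ p in atTop, ∀ i, r p i < 1 := by
      rw [eventually_all]
      intro i
      exact (hrow i).eventually_lt_const one_pos
    obtain ⟨N, hN1, hN⟩ := ((eventually_ge_atTop 1).and hev).exists
    have hr0 : ∀ i, r 0 i = 1 := by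
      intro i; simp [hr, Matrix.one_apply]
    have hrnn : ∀ k i, 0 ≤ r k i := fun k i =>
      Finset.sum_nonneg fun j _ => hpow k i j
    refine ⟨fun i => ∑ k ∈ Finset.range N, r k i, ?_, ?_⟩
    · intro i
      have h1 : r 0 i ≤ ∑ k ∈ Finset.range N, r k i :=
        Finset.single_le_sum (fun k _ => hrnn k i)
          (Finset.mem_range.mpr hN1)
      rw [hr0] at h1
      linarith
    · intro i
      have hstep : ∀ k j, ∑ l, A j l * r k l = r (k + 1) j := by
        intro k j
        have h1 : r (k + 1) j = ∑ m, ∑ l, A j l * (A ^ k) l m := by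
          simp only [hr, pow_succ', Matrix.mul_apply]
        rw [h1, Finset.sum_comm]
        simp [hr, Finset.mul_sum]
      have hmv : A.mulVec (fun i => ∑ k ∈ Finset.range N, r k i) i
          = ∑ k ∈ Finset.range N, r (k + 1) i := by
        simp only [Matrix.mulVec, dotProduct, Finset.mul_sum]
        rw [Finset.sum_comm]
        exact Finset.sum_congr rfl fun k _ => hstep k i
      have htel : ∑ k ∈ Finset.range N, r (k + 1) i
          = (∑ k ∈ Finset.range N, r k i) + r N i - 1 := by
        have h1 := Finset.sum_range_succ' (fun k => r k i) N
        have h2 := Finset.sum_range_succ (fun k => r k i) N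
        rw [hr0] at h1
        linarith
      rw [hmv, htel]
      linarith [hN i]
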